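/- Main theorem: If σ = (1, λ_2, ..., λ_n) is a list of real numbers with λ_j ≤ 0 for j = 2, ..., n and 1 + λ_2 + ... + λ_n ≥ 1/2, then there exists a symmetric doubly stochastic n×n matrix whose spectrum (with multiplicity) is exactly σ. -/

import Mathlib

open Real Complex Finset

lemma expS (n : ℕ) (hn : 0 < n) (m : ℤ) :
    ∑ k ∈ Finset.range n, Complex.exp (2 * π * Complex.I * m * k / n)
      = if (n : ℤ) ∣ m then (n : ℂ) else 0 := by
  have hne : (n : ℂ) ≠ 0 := Nat.cast_ne_zero.2 hn.ne'
  have hπ : (π:ℂ) ≠ 0 := by exact_mod_cast Real.pi_ne_zero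
  by_cases hd : (n : ℤ) ∣ m
  · rw [if_pos hd]
    obtain ⟨c, rfl⟩ := hd
    have h1 : ∀ k ∈ Finset.range n, Complex.exp (2 * π * Complex.I * (((n:ℤ) * c : ℤ) : ℂ) * k / n) = 1 := by
      intro k _
      have h2 : (2 * (π:ℂ) * Complex.I * (((n:ℤ) * c : ℤ) : ℂ) * k / n) = ((c * k : ℤ) : ℂ) * (2 * π * Complex.I) := by
        push_cast
        field_simp
      rw [h2, Complex.exp_int_mul_two_pi_mul_I]
    rw [Finset.sum_congr rfl h1]
    simp
  · rw [if_neg hd]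
    set r : ℂ := Complex.exp (2 * π * Complex.I * m / n) with hr
    have hterm : ∀ k ∈ Finset.range n, Complex.exp (2 * π * Complex.I * m * k / n) = r ^ k := by
      intro k _
      rw [hr, ← Complex.exp_nat_mul]
      ring_nf
    have hr1 : r ≠ 1 := by
      rw [hr]
      intro h
      rw [Complex.exp_eq_one_iff] at h
      obtain ⟨c, hc⟩ := h
      apply hd
      refine ⟨c, ?_⟩
      have h3 : (m : ℂ) = (n : ℂ) * c := by
        field_simp at hc
        have h2 : (2 * (π:ℂ) * Complex.I) ≠ 0 := by
          simp [hπ, Complex.I_ne_zero, two_ne_zero]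
        apply mul_left_cancel₀ h2
        linear_combination (2 * (π:ℂ) * Complex.I) * hc
      exact_mod_cast h3
    rw [Finset.sum_congr rfl hterm, geom_sum_eq hr1]
    have hrn : r ^ n = 1 := by
      rw [hr, ← Complex.exp_nat_mul]
      have h2 : (n:ℂ) * (2 * π * Complex.I * m / n) = (m : ℂ) * (2 * π * Complex.I) := by
        field_simp
      rw [h2]
      exact_mod_cast Complex.exp_int_mul_two_pi_mul_I m
    rw [hrn, sub_self, zero_div]

lemma sumcos (n : ℕ) (hn : 0 < n) (m : ℤ) :
    ∑ k ∈ Finset.range n, Real.cos (2 * π * m * k / n) = if (n : ℤ) ∣ m then (n : ℝ) else 0 := by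
  have h := expS n hn m
  have hcast : ∀ k : ℕ, (2 * (π:ℂ) * Complex.I * m * k / n) = ((2 * π * m * k / n : ℝ) : ℂ) * Complex.I := by
    intro k; push_cast; ring
  have h2 : ∑ k ∈ Finset.range n, Complex.exp (((2 * π * m * k / n : ℝ) : ℂ) * Complex.I)
      = if (n : ℤ) ∣ m then (n : ℂ) else 0 := by
    rw [← h]; exact Finset.sum_congr rfl fun k _ => by rw [hcast k]
  have h3 := congrArg Complex.re h2
  rw [Complex.re_sum] at h3
  simp only [Complex.exp_ofReal_mul_I_re] at h3
  rw [h3]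
  split <;> simp

lemma sumsin (n : ℕ) (hn : 0 < n) (m : ℤ) :
    ∑ k ∈ Finset.range n, Real.sin (2 * π * m * k / n) = 0 := by
  have h := expS n hn m
  have hcast : ∀ k : ℕ, (2 * (π:ℂ) * Complex.I * m * k / n) = ((2 * π * m * k / n : ℝ) : ℂ) * Complex.I := by
    intro k; push_cast; ring
  have h2 : ∑ k ∈ Finset.range n, Complex.exp (((2 * π * m * k / n : ℝ) : ℂ) * Complex.I)
      = if (n : ℤ) ∣ m then (n : ℂ) else 0 := by
    rw [← h]; exact Finset.sum_congr rfl fun k _ => by rw [hcast k]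
  have h3 := congrArg Complex.im h2
  rw [Complex.im_sum] at h3
  simp only [Complex.exp_ofReal_mul_I_im] at h3
  rw [h3]
  split <;> simp

lemma cas_orth (n : ℕ) (hn : 0 < n) (j l : Fin n) :
    ∑ k : Fin n, ((Real.cos (2 * π * j * k / n) + Real.sin (2 * π * j * k / n)) *
      (Real.cos (2 * π * l * k / n) + Real.sin (2 * π * l * k / n)))
      = if j = l then (n : ℝ) else 0 := by
  have key : ∀ k : ℕ,
      (Real.cos (2 * π * j * k / n) + Real.sin (2 * π * j * k / n)) *
      (Real.cos (2 * π * l * k / n) + Real.sin (2 * π * l * k / n))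
      = Real.cos (2 * π * (Int.cast ((j:ℤ) - (l:ℤ)) : ℝ) * k / n)
        + Real.sin (2 * π * (((j:ℕ) + (l:ℕ) : ℤ) : ℝ) * k / n) := by
    intro k
    have e1 : 2 * π * (Int.cast ((j:ℤ) - (l:ℤ)) : ℝ) * k / n
        = 2 * π * j * k / n - 2 * π * l * k / n := by push_cast; ring
    have e2 : 2 * π * (((j:ℕ) + (l:ℕ) : ℤ) : ℝ) * k / n
        = 2 * π * j * k / n + 2 * π * l * k / n := by push_cast; ring
    rw [e1, e2, Real.cos_sub, Real.sin_add]
    ring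
  rw [Fin.sum_univ_eq_sum_range (fun k : ℕ =>
    (Real.cos (2 * π * j * k / n) + Real.sin (2 * π * j * k / n)) *
      (Real.cos (2 * π * l * k / n) + Real.sin (2 * π * l * k / n))) n]
  calc ∑ k ∈ Finset.range n, ((Real.cos (2 * π * j * k / n) + Real.sin (2 * π * j * k / n)) *
      (Real.cos (2 * π * l * k / n) + Real.sin (2 * π * l * k / n)))
      = ∑ k ∈ Finset.range n, (Real.cos (2 * π * (Int.cast ((j:ℤ) - (l:ℤ)) : ℝ) * k / n)
        + Real.sin (2 * π * (((j:ℕ) + (l:ℕ) : ℤ) : ℝ) * k / n)) := by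
        exact Finset.sum_congr rfl fun k _ => key k
    _ = (if (n:ℤ) ∣ ((j:ℤ) - (l:ℤ)) then (n:ℝ) else 0) + 0 := by
        rw [Finset.sum_add_distrib, sumcos n hn ((j:ℤ) - (l:ℤ)), sumsin n hn ((j:ℕ) + (l:ℕ) : ℤ)]
    _ = if j = l then (n : ℝ) else 0 := by
        rw [add_zero]
        congr 1
        simp only [eq_iff_iff]
        constructor
        · intro hd
          have h0 : ((j:ℤ) - (l:ℤ)) = 0 := by
            apply Int.eq_zero_of_abs_lt_dvd hd
            have hj := j.isLt; have hl := l.isLt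
            rw [abs_lt]; omega
          have : (j:ℕ) = (l:ℕ) := by omega
          exact Fin.ext this
        · rintro rfl; simp

open Matrix Polynomial

theorem stmt_12 (n : ℕ) (hn : 1 ≤ n)
    (lam : Fin n → ℝ) (hlam0 : lam ⟨0, by omega⟩ = 1)
    (hneg : ∀ j : Fin n, j ≠ ⟨0, by omega⟩ → lam j ≤ 0)
    (hsum : ∑ j : Fin n, lam j ≥ 1 / 2) :
    ∃ A : Matrix (Fin n) (Fin n) ℝ,
      Aᵀ = A ∧
      (∀ k l : Fin n, 0 ≤ A k l) ∧
      (∀ k : Fin n, ∑ l : Fin n, A k l = 1) ∧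
      (∀ l : Fin n, ∑ k : Fin n, A k l = 1) ∧
      A.charpoly = ∏ i : Fin n, (Polynomial.X - Polynomial.C (lam i)) := by
  have hn0 : 0 < n := hn
  have hnR : (0:ℝ) < n := by exact_mod_cast hn0
  set z : Fin n := ⟨0, by omega⟩ with hz
  set Q : Matrix (Fin n) (Fin n) ℝ :=
    Matrix.of (fun j k => Real.cos (2 * π * j * k / n) + Real.sin (2 * π * j * k / n)) with hQ
  have hQapp : ∀ j k, Q j k = Real.cos (2 * π * j * k / n) + Real.sin (2 * π * j * k / n) :=
    fun j k => rfl
  have horth : ∀ j l : Fin n, ∑ k : Fin n, Q j k * Q l k = if j = l then (n:ℝ) else 0 :=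
    fun j l => cas_orth n hn0 j l
  have hQsymm' : ∀ j k, Q j k = Q k j := by
    intro j k
    rw [hQapp, hQapp, show (2 * π * (k:ℕ) * (j:ℕ) / n : ℝ) = 2 * π * (j:ℕ) * (k:ℕ) / n by ring]
  have hQz : ∀ k, Q k z = 1 := by
    intro k
    rw [hQapp]
    have : (2 * π * (k:ℕ) * ((z:Fin n):ℕ) / n : ℝ) = 0 := by
      have : ((z:Fin n):ℕ) = 0 := rfl
      rw [this]; simp
    rw [this]; simp
  have hQcol : ∀ j, ∑ k : Fin n, Q j k = if j = z then (n:ℝ) else 0 := by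
    intro j
    have := horth j z
    have h1 : ∀ k, Q j k * Q z k = Q j k := by
      intro k; rw [hQsymm' z k, hQz k, mul_one]
    rwa [Finset.sum_congr rfl (fun k _ => h1 k)] at this
  -- the matrix
  set A : Matrix (Fin n) (Fin n) ℝ := (1/(n:ℝ)) • (Q * Matrix.diagonal lam * Qᵀ) with hA
  have hAapp : ∀ k l, A k l = (1/(n:ℝ)) * ∑ j : Fin n, Q k j * lam j * Q l j := by
    intro k l
    rw [hA]
    simp only [Matrix.smul_apply, smul_eq_mul]
    congr 1
    rw [Matrix.mul_apply]
    congr 1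
    ext j
    rw [Matrix.mul_diagonal, Matrix.transpose_apply]
  -- symmetry
  have hsymmA : Aᵀ = A := by
    ext k l
    rw [Matrix.transpose_apply, hAapp, hAapp]
    congr 1
    apply Finset.sum_congr rfl
    intro j _
    ring
  -- sum of negative part
  have hrest : ∑ j ∈ Finset.univ.erase z, lam j ≥ -(1/2) := by
    have h1 : lam z + ∑ j ∈ Finset.univ.erase z, lam j = ∑ j : Fin n, lam j :=
      Finset.add_sum_erase _ _ (Finset.mem_univ z)
    have h2 : lam z = 1 := hlam0
    linarith [hsum]
  -- product bound
  have hprod2 : ∀ a b : ℝ, (Real.cos a + Real.sin a) * (Real.cos b + Real.sin b) ≤ 2 := by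
    intro a b
    nlinarith [Real.sin_sq_add_cos_sq a, Real.sin_sq_add_cos_sq b,
      sq_nonneg (Real.cos a + Real.sin a - Real.cos b - Real.sin b),
      sq_nonneg (Real.cos a - Real.sin a), sq_nonneg (Real.cos b - Real.sin b)]
  have hQprod : ∀ k l j : Fin n, Q k j * Q l j ≤ 2 := by
    intro k l j; rw [hQapp, hQapp]; exact hprod2 _ _
  -- nonnegativity
  have hnonneg : ∀ k l : Fin n, 0 ≤ A k l := by
    intro k l
    rw [hAapp]
    have hsplit : ∑ j : Fin n, Q k j * lam j * Q l j
        = Q k z * lam z * Q l z + ∑ j ∈ Finset.univ.erase z, Q k j * lam j * Q l j :=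
      (Finset.add_sum_erase _ _ (Finset.mem_univ z)).symm
    have hmain : ∑ j ∈ Finset.univ.erase z, Q k j * lam j * Q l j ≥ -1 := by
      have hterm : ∀ j ∈ Finset.univ.erase z, 2 * lam j ≤ Q k j * lam j * Q l j := by
        intro j hj
        have hjz : j ≠ z := Finset.ne_of_mem_erase hj
        have hl : lam j ≤ 0 := hneg j hjz
        have h2 : Q k j * Q l j ≤ 2 := hQprod k l j
        nlinarith
      have := Finset.sum_le_sum hterm
      rw [← Finset.mul_sum] at this
      linarith [hrest]
    rw [hsplit, hQz k, hQz l, hlam0]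
    have : (0:ℝ) ≤ 1 * 1 * 1 + ∑ j ∈ Finset.univ.erase z, Q k j * lam j * Q l j := by
      linarith
    positivity
  -- row sums
  have hrow : ∀ k : Fin n, ∑ l : Fin n, A k l = 1 := by
    intro k
    have h1 : ∑ l : Fin n, A k l
        = (1/(n:ℝ)) * ∑ j : Fin n, Q k j * lam j * (∑ l : Fin n, Q j l) := by
      rw [Finset.sum_congr rfl (fun l _ => hAapp k l), ← Finset.mul_sum]
      congr 1
      rw [Finset.sum_comm]
      apply Finset.sum_congr rfl
      intro j _
      rw [Finset.mul_sum]
      apply Finset.sum_congr rfl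
      intro l _
      rw [hQsymm' l j]
    rw [h1]
    have h2 : ∀ j : Fin n, Q k j * lam j * (∑ l : Fin n, Q j l)
        = if j = z then Q k j * lam j * n else 0 := by
      intro j
      rw [hQcol j]
      split <;> simp
    rw [Finset.sum_congr rfl (fun j _ => h2 j), Finset.sum_ite_eq' Finset.univ z
      (fun j => Q k j * lam j * n)]
    simp only [Finset.mem_univ, if_true]
    rw [hQz k, hlam0]
    field_simp
  have hcol : ∀ l : Fin n, ∑ k : Fin n, A k l = 1 := by
    intro l
    have h1 : ∀ k : Fin n, A k l = A l k := by
      intro k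
      have h2 := congrFun (congrFun hsymmA l) k
      exact h2
    rw [Finset.sum_congr rfl (fun k _ => h1 k)]
    exact hrow l
  -- charpoly
  have hQsymmM : Qᵀ = Q := by
    ext j k; exact hQsymm' k j
  have hQQ : Q * Q = (n : ℝ) • (1 : Matrix (Fin n) (Fin n) ℝ) := by
    ext j l
    rw [Matrix.mul_apply]
    simp only [Matrix.smul_apply, Matrix.one_apply, smul_eq_mul]
    rw [Finset.sum_congr rfl (fun k _ => by rw [hQsymm' k l] : ∀ k ∈ Finset.univ, Q j k * Q k l = Q j k * Q l k)]
    rw [horth j l]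
    split <;> simp
  have hcharp : A.charpoly = ∏ i : Fin n, (Polynomial.X - Polynomial.C (lam i)) := by
    set P : Matrix (Fin n) (Fin n) ℝ := (1/(n:ℝ)) • Q with hP
    have hQP : Q * P = 1 := by
      rw [hP, Matrix.mul_smul, hQQ, smul_smul, show (1/(n:ℝ)) * n = 1 by field_simp, one_smul]
    have hPQ : P * Q = 1 := by
      rw [hP, Matrix.smul_mul, hQQ, smul_smul, show (1/(n:ℝ)) * n = 1 by field_simp, one_smul]
    have hAPDP : A = Q * Matrix.diagonal lam * P := by
      rw [hA, hP, Matrix.mul_smul, hQsymmM]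
    set mapC : Matrix (Fin n) (Fin n) ℝ →+* Matrix (Fin n) (Fin n) ℝ[X] := (Polynomial.C : ℝ →+* ℝ[X]).mapMatrix with hmapC
    have hmul : ∀ M N : Matrix (Fin n) (Fin n) ℝ, mapC (M * N) = mapC M * mapC N := by
      intro M N
      exact RingHom.map_mul (RingHom.mapMatrix (Polynomial.C : ℝ →+* ℝ[X])) M N
    have hscal : mapC Q * Matrix.scalar (Fin n) (X : ℝ[X]) = Matrix.scalar (Fin n) (X : ℝ[X]) * mapC Q :=
      (Matrix.scalar_commute (X : ℝ[X]) (fun r' => mul_comm _ _) (mapC Q)).symm.eq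
    have hcm : charmatrix A = mapC Q * charmatrix (Matrix.diagonal lam) * mapC P := by
      unfold charmatrix
      rw [Matrix.mul_sub, Matrix.sub_mul]
      congr 1
      · rw [hscal, Matrix.mul_assoc, ← hmul, hQP, RingHom.map_one, Matrix.mul_one]
      · rw [hAPDP]
        show mapC (Q * Matrix.diagonal lam * P) = mapC Q * mapC (Matrix.diagonal lam) * mapC P
        rw [hmul, hmul]
    have hdetQP : (mapC Q).det * (mapC P).det = 1 := by
      rw [← Matrix.det_mul, ← hmul, hQP, RingHom.map_one, Matrix.det_one]
    have hD : charmatrix (Matrix.diagonal lam) = Matrix.diagonal (fun i => (X:ℝ[X]) - Polynomial.C (lam i)) := by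
      ext i j
      by_cases h : i = j
      · subst h
        rw [charmatrix_apply_eq, Matrix.diagonal_apply_eq, Matrix.diagonal_apply_eq]
      · rw [charmatrix_apply_ne _ _ _ h, Matrix.diagonal_apply_ne _ h, Matrix.diagonal_apply_ne _ h]
        simp
    rw [Matrix.charpoly, hcm, Matrix.det_mul, Matrix.det_mul, hD, Matrix.det_diagonal]
    calc (mapC Q).det * (∏ i : Fin n, ((X:ℝ[X]) - Polynomial.C (lam i))) * (mapC P).det
        = ((mapC Q).det * (mapC P).det) * ∏ i : Fin n, ((X:ℝ[X]) - Polynomial.C (lam i)) := by ring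
      _ = ∏ i : Fin n, ((X:ℝ[X]) - Polynomial.C (lam i)) := by rw [hdetQP, one_mul]
  exact ⟨A, hsymmA, hnonneg, hrow, hcol, hcharp⟩
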